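/- Let X = (X₁,...,Xₙ) be a mean-zero multivariate Gaussian with nondegenerate covariance, and let f be an L²(X)-integrable function. Then for each i, E[X_i f(X)] = ∑_{j=1}^n (Cov(X_i, X_j)/Var(X_j | X_{∖j})) · E[(X_j − E[X_j | X_{∖j}]) f(X)], where X_{∖j} denotes X with the j-th coordinate removed, E[X_j|X_{∖j}] = Cov(X_j, X_{∖j})Cov(X_{∖j}, X_{∖j})⁺X_{∖j}, and Var(X_j|X_{∖j}) = Var(X_j) − Cov(X_j, X_{∖j})Cov(X_{∖j}, X_{∖j})⁺Cov(X_{∖j}, X_j). -/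

import Mathlib

open MeasureTheory ProbabilityTheory Matrix

/-- A measure `ν` on `d → ℝ` is the multivariate Gaussian with mean `m` and covariance `K`
iff every linear functional pushes it forward to the corresponding real Gaussian. -/
def IsGaussianVec {d : Type*} [Fintype d] [MeasurableSpace (d → ℝ)]
    (m : d → ℝ) (K : Matrix d d ℝ) (ν : Measure (d → ℝ)) : Prop :=
  ∀ l : d → ℝ, Measure.map (fun x => ∑ i, l i * x i) ν
    = gaussianReal (∑ i, l i * m i) (Real.toNNReal (l ⬝ᵥ K.mulVec l))

/-- `B` is the Moore–Penrose pseudoinverse of `A`. -/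
def IsMoorePenrose {n m : Type*} [Fintype n] [Fintype m]
    (A : Matrix n m ℝ) (B : Matrix m n ℝ) : Prop :=
  A * B * A = A ∧ B * A * B = B ∧ (A * B)ᵀ = A * B ∧ (B * A)ᵀ = B * A


lemma memLp_id_two_gaussian0 (v : NNReal) : MemLp (id : ℝ → ℝ) 2 (gaussianReal 0 v) := by
  by_cases hv : v = 0
  · subst hv
    rw [gaussianReal_zero_var]
    exact (memLp_const (0:ℝ)).ae_eq (MeasureTheory.ae_eq_dirac (id : ℝ → ℝ)).symm
  · rw [gaussianReal_of_var_ne_zero _ hv,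
      memLp_two_iff_integrable_sq aestronglyMeasurable_id,
      integrable_withDensity_iff (measurable_gaussianPDF _ _)
        (Filter.Eventually.of_forall fun x => ENNReal.ofReal_lt_top)]
    have hb : (0:ℝ) < (2 * (v:ℝ))⁻¹ := by positivity
    have h := (integrable_rpow_mul_exp_neg_mul_sq hb (s := 2) (by norm_num)).const_mul
      ((Real.sqrt (2 * Real.pi * (v:ℝ)))⁻¹)
    refine h.congr (Filter.Eventually.of_forall fun x => ?_)
    simp only [id_eq, gaussianPDF, gaussianPDFReal]
    rw [ENNReal.toReal_ofReal (by positivity)]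
    rw [Real.rpow_two]
    have : -(x - 0)^2 / (2 * (v:ℝ)) = -(2 * (v:ℝ))⁻¹ * x^2 := by
      field_simp
      ring
    rw [this]
    ring

lemma memLp_linear_of_gaussian {n : ℕ} {K : Matrix (Fin n) (Fin n) ℝ}
    {ν : Measure (Fin n → ℝ)} (hν : IsGaussianVec (fun _ => 0) K ν) (l : Fin n → ℝ) :
    MemLp (fun x : Fin n → ℝ => ∑ m, l m * x m) 2 ν := by
  have hmeas : Measurable (fun x : Fin n → ℝ => ∑ m, l m * x m) := by
    exact Finset.measurable_sum _ fun m _ => (measurable_pi_apply m).const_mul _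
  have hmap := hν l
  simp only [mul_zero, Finset.sum_const_zero] at hmap
  have h1 : MemLp (id : ℝ → ℝ) 2 (Measure.map (fun x : Fin n → ℝ => ∑ m, l m * x m) ν) := by
    rw [hmap]; exact memLp_id_two_gaussian0 _
  have := (memLp_map_measure_iff aestronglyMeasurable_id hmeas.aemeasurable).mp h1
  simpa using this

lemma integrable_mul_of_memLp_two {α : Type*} [MeasurableSpace α] {μ : Measure α}
    {g f : α → ℝ} (hg : MemLp g 2 μ) (hf : MemLp f 2 μ) :
    Integrable (fun x => g x * f x) μ := by
  have h : MemLp (g • f) 1 μ := hf.smul hg (hpqr := ⟨by simp [ENNReal.inv_two_add_inv_two]⟩)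
  rw [memLp_one_iff_integrable] at h
  exact h.congr (Filter.Eventually.of_forall fun x => by simp [smul_eq_mul])

lemma sub_posDef {n : ℕ} {K : Matrix (Fin n) (Fin n) ℝ} (hK : K.PosDef) (j : Fin n) :
    (Matrix.of fun a b : {k : Fin n // k ≠ j} => K (a : Fin n) (b : Fin n)).PosDef := by
  refine Matrix.PosDef.of_dotProduct_mulVec_pos ?_ ?_
  · ext a b
    simp only [conjTranspose_apply, Matrix.of_apply, star_trivial]
    exact (hK.1.apply _ _).symm ▸ (by simpa using (hK.1.apply (b : Fin n) (a : Fin n)))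
  · intro x hx
    classical
    set y : Fin n → ℝ := fun k => if h : k = j then 0 else x ⟨k, h⟩ with hy
    have hyne : y ≠ 0 := by
      intro h0
      apply hx
      funext a
      have := congrFun h0 (a : Fin n)
      simpa [hy, a.prop] using this
    have := hK.dotProduct_mulVec_pos hyne
    simp only [star_trivial] at this ⊢
    convert this using 1
    rw [dotProduct, dotProduct]
    rw [Fintype.sum_eq_add_sum_compl j (fun k => y k * (K *ᵥ y) k)]
    have hyj : y j = 0 := by simp [hy]
    rw [hyj, zero_mul, zero_add]
    rw [Finset.sum_subtype (p := fun k => k ≠ j) ({j}ᶜ : Finset (Fin n)) (fun k => by simp) (fun k => y k * (K *ᵥ y) k)]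
    have hya : ∀ a : {k : Fin n // k ≠ j}, y (a : Fin n) = x a := fun a => by simp [hy, a.prop]
    apply Finset.sum_congr rfl
    intro a _
    rw [hya a]
    congr 1
    rw [Matrix.mulVec, Matrix.mulVec, dotProduct, dotProduct,
      Fintype.sum_eq_add_sum_compl j (fun k => K (a : Fin n) k * y k), hyj, mul_zero, zero_add,
      Finset.sum_subtype (p := fun k => k ≠ j) ({j}ᶜ : Finset (Fin n)) (fun k => by simp) (fun k => K (a : Fin n) k * y k)]
    apply Finset.sum_congr rfl
    intro b _
    rw [hya b]
    rfl

lemma mp_inv_left {n : ℕ} {K : Matrix (Fin n) (Fin n) ℝ} (hK : K.PosDef) (j : Fin n)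
    {Kpj : Matrix {k : Fin n // k ≠ j} {k : Fin n // k ≠ j} ℝ}
    (hmp : IsMoorePenrose (Matrix.of fun a b : {k : Fin n // k ≠ j} =>
      K (a : Fin n) (b : Fin n)) Kpj) :
    Kpj * (Matrix.of fun a b : {k : Fin n // k ≠ j} => K (a : Fin n) (b : Fin n)) = 1 := by
  set A := Matrix.of fun a b : {k : Fin n // k ≠ j} => K (a : Fin n) (b : Fin n) with hA
  have hApd := sub_posDef hK j
  have hdet : IsUnit A.det := (Matrix.isUnit_iff_isUnit_det _).mp hApd.isUnit
  have h1 := hmp.1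
  calc Kpj * A = A⁻¹ * A * (Kpj * A) := by rw [Matrix.nonsing_inv_mul _ hdet, Matrix.one_mul]
      _ = A⁻¹ * (A * Kpj * A) := by rw [Matrix.mul_assoc, Matrix.mul_assoc]
      _ = A⁻¹ * A := by rw [h1]
      _ = 1 := Matrix.nonsing_inv_mul _ hdet

noncomputable def wvec {n : ℕ} (K : Matrix (Fin n) (Fin n) ℝ) (j : Fin n)
    (Kpj : Matrix {k : Fin n // k ≠ j} {k : Fin n // k ≠ j} ℝ) : Fin n → ℝ :=
  fun m => if h : m = j then 1 else -∑ a : {k : Fin n // k ≠ j}, K j (a : Fin n) * Kpj a ⟨m, h⟩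

noncomputable def sval {n : ℕ} (K : Matrix (Fin n) (Fin n) ℝ) (j : Fin n)
    (Kpj : Matrix {k : Fin n // k ≠ j} {k : Fin n // k ≠ j} ℝ) : ℝ :=
  K j j - ∑ a : {k : Fin n // k ≠ j}, ∑ b : {k : Fin n // k ≠ j},
    K j (a : Fin n) * Kpj a b * K (b : Fin n) j

lemma dot_w {n : ℕ} (K : Matrix (Fin n) (Fin n) ℝ) (j : Fin n)
    (Kpj : Matrix {k : Fin n // k ≠ j} {k : Fin n // k ≠ j} ℝ) (x : Fin n → ℝ) :
    ∑ m, wvec K j Kpj m * x m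
      = x j - ∑ a : {k : Fin n // k ≠ j}, ∑ b : {k : Fin n // k ≠ j},
          K j (a : Fin n) * Kpj a b * x (b : Fin n) := by
  rw [Fintype.sum_eq_add_sum_compl j (fun m => wvec K j Kpj m * x m),
    Finset.sum_subtype (p := fun k => k ≠ j) ({j}ᶜ : Finset (Fin n)) (fun k => by simp)
      (fun m => wvec K j Kpj m * x m)]
  have h1 : wvec K j Kpj j = 1 := by simp [wvec]
  have h2 : ∀ b : {k : Fin n // k ≠ j}, wvec K j Kpj (b : Fin n)
      = -∑ a : {k : Fin n // k ≠ j}, K j (a : Fin n) * Kpj a b := by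
    intro b
    simp only [wvec, dif_neg b.prop]
  rw [h1, one_mul]
  have h3 : ∑ b : {k : Fin n // k ≠ j}, wvec K j Kpj (b : Fin n) * x (b : Fin n)
      = -∑ a : {k : Fin n // k ≠ j}, ∑ b : {k : Fin n // k ≠ j},
          K j (a : Fin n) * Kpj a b * x (b : Fin n) := by
    calc ∑ b : {k : Fin n // k ≠ j}, wvec K j Kpj (b : Fin n) * x (b : Fin n)
        = ∑ b : {k : Fin n // k ≠ j}, -∑ a : {k : Fin n // k ≠ j},
            K j (a : Fin n) * Kpj a b * x (b : Fin n) := by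
          refine Finset.sum_congr rfl fun b _ => ?_
          rw [h2 b, neg_mul, Finset.sum_mul]
      _ = -∑ b : {k : Fin n // k ≠ j}, ∑ a : {k : Fin n // k ≠ j},
            K j (a : Fin n) * Kpj a b * x (b : Fin n) := by
          rw [Finset.sum_neg_distrib]
      _ = -∑ a : {k : Fin n // k ≠ j}, ∑ b : {k : Fin n // k ≠ j},
            K j (a : Fin n) * Kpj a b * x (b : Fin n) := by
          rw [Finset.sum_comm]
  rw [h3]
  ring

lemma mulVec_w {n : ℕ} {K : Matrix (Fin n) (Fin n) ℝ} (hK : K.PosDef) (j : Fin n)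
    {Kpj : Matrix {k : Fin n // k ≠ j} {k : Fin n // k ≠ j} ℝ}
    (hmp : IsMoorePenrose (Matrix.of fun a b : {k : Fin n // k ≠ j} =>
      K (a : Fin n) (b : Fin n)) Kpj) (m : Fin n) :
    (K *ᵥ wvec K j Kpj) m = if m = j then sval K j Kpj else 0 := by
  have hsym : ∀ a b, K a b = K b a := fun a b => by simpa using (hK.1.apply a b).symm
  have hleft := mp_inv_left hK j hmp
  have expand : (K *ᵥ wvec K j Kpj) m
      = K m j - ∑ b : {k : Fin n // k ≠ j}, ∑ a : {k : Fin n // k ≠ j},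
          K m (b : Fin n) * (K j (a : Fin n) * Kpj a b) := by
    rw [Matrix.mulVec, dotProduct,
      Fintype.sum_eq_add_sum_compl j (fun k => K m k * wvec K j Kpj k),
      Finset.sum_subtype (p := fun k => k ≠ j) ({j}ᶜ : Finset (Fin n)) (fun k => by simp)
        (fun k => K m k * wvec K j Kpj k)]
    have h1 : wvec K j Kpj j = 1 := by simp [wvec]
    rw [h1, mul_one]
    have : ∀ b : {k : Fin n // k ≠ j}, K m (b : Fin n) * wvec K j Kpj (b : Fin n)
        = -∑ a : {k : Fin n // k ≠ j}, K m (b : Fin n) * (K j (a : Fin n) * Kpj a b) := by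
      intro b
      simp only [wvec, dif_neg b.prop, mul_neg, Finset.mul_sum]
    rw [Finset.sum_congr rfl (fun b _ => this b), Finset.sum_neg_distrib]
    ring
  rw [expand]
  by_cases hm : m = j
  · subst hm
    rw [if_pos rfl, sval]
    congr 1
    rw [Finset.sum_comm]
    refine Finset.sum_congr rfl fun a _ => Finset.sum_congr rfl fun b _ => ?_
    rw [hsym m (b : Fin n)]
    ring
  · rw [if_neg hm]
    have key : ∀ a : {k : Fin n // k ≠ j},
        ∑ b : {k : Fin n // k ≠ j}, Kpj a b * K (b : Fin n) m
          = if a = (⟨m, hm⟩ : {k : Fin n // k ≠ j}) then 1 else 0 := by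
      intro a
      have := congrFun (congrFun hleft a) ⟨m, hm⟩
      rw [Matrix.mul_apply] at this
      simpa [Matrix.one_apply] using this
    have : ∑ b : {k : Fin n // k ≠ j}, ∑ a : {k : Fin n // k ≠ j},
        K m (b : Fin n) * (K j (a : Fin n) * Kpj a b) = K m j := by
      rw [Finset.sum_comm]
      calc ∑ a : {k : Fin n // k ≠ j}, ∑ b : {k : Fin n // k ≠ j},
            K m (b : Fin n) * (K j (a : Fin n) * Kpj a b)
          = ∑ a : {k : Fin n // k ≠ j}, K j (a : Fin n)
              * ∑ b : {k : Fin n // k ≠ j}, Kpj a b * K (b : Fin n) m := by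
            refine Finset.sum_congr rfl fun a _ => ?_
            rw [Finset.mul_sum]
            refine Finset.sum_congr rfl fun b _ => ?_
            rw [hsym m (b : Fin n)]
            ring
        _ = ∑ a : {k : Fin n // k ≠ j}, K j (a : Fin n)
              * if a = (⟨m, hm⟩ : {k : Fin n // k ≠ j}) then 1 else 0 := by
            refine Finset.sum_congr rfl fun a _ => by rw [key a]
        _ = K j m := by
            simp [mul_ite]
        _ = K m j := hsym j m
    rw [this]
    ring

lemma sval_pos {n : ℕ} {K : Matrix (Fin n) (Fin n) ℝ} (hK : K.PosDef) (j : Fin n)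
    {Kpj : Matrix {k : Fin n // k ≠ j} {k : Fin n // k ≠ j} ℝ}
    (hmp : IsMoorePenrose (Matrix.of fun a b : {k : Fin n // k ≠ j} =>
      K (a : Fin n) (b : Fin n)) Kpj) :
    0 < sval K j Kpj := by
  have hwne : wvec K j Kpj ≠ 0 := by
    intro h0
    have := congrFun h0 j
    simp [wvec] at this
  have hpos := hK.dotProduct_mulVec_pos hwne
  simp only [star_trivial] at hpos
  have : wvec K j Kpj ⬝ᵥ (K *ᵥ wvec K j Kpj) = sval K j Kpj := by
    rw [dotProduct]
    rw [Finset.sum_congr rfl (fun m _ => by rw [mulVec_w hK j hmp m])]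
    simp [mul_ite, wvec]
  rwa [this] at hpos

lemma w_eq_inv {n : ℕ} {K : Matrix (Fin n) (Fin n) ℝ} (hK : K.PosDef) (j : Fin n)
    {Kpj : Matrix {k : Fin n // k ≠ j} {k : Fin n // k ≠ j} ℝ}
    (hmp : IsMoorePenrose (Matrix.of fun a b : {k : Fin n // k ≠ j} =>
      K (a : Fin n) (b : Fin n)) Kpj) (m : Fin n) :
    wvec K j Kpj m = sval K j Kpj * K⁻¹ m j := by
  have hdet : IsUnit K.det := (Matrix.isUnit_iff_isUnit_det _).mp hK.isUnit
  have h1 : K⁻¹ *ᵥ (K *ᵥ wvec K j Kpj) = wvec K j Kpj := by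
    rw [Matrix.mulVec_mulVec, Matrix.nonsing_inv_mul _ hdet, Matrix.one_mulVec]
  have h2 := congrFun h1 m
  rw [Matrix.mulVec, dotProduct] at h2
  rw [← h2, Finset.sum_congr rfl (fun k _ => by rw [mulVec_w hK j hmp k])]
  simp [mul_ite, mul_comm]

lemma key_sum {n : ℕ} {K : Matrix (Fin n) (Fin n) ℝ} (hK : K.PosDef)
    (Kp : ∀ j : Fin n, Matrix {k : Fin n // k ≠ j} {k : Fin n // k ≠ j} ℝ)
    (hKp : ∀ j, IsMoorePenrose (Matrix.of fun a b : {k : Fin n // k ≠ j} =>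
      K (a : Fin n) (b : Fin n)) (Kp j)) (i m : Fin n) :
    ∑ j, (K i j / sval K j (Kp j)) * wvec K j (Kp j) m = if m = i then 1 else 0 := by
  have hdet : IsUnit K.det := (Matrix.isUnit_iff_isUnit_det _).mp hK.isUnit
  have hsym : ∀ a b, K a b = K b a := fun a b => by simpa using (hK.1.apply a b).symm
  have hKT : Kᵀ = K := Matrix.ext fun a b => by rw [Matrix.transpose_apply, hsym b a]
  have hinvsym : ∀ a b, K⁻¹ a b = K⁻¹ b a := by
    intro a b
    have ht : (K⁻¹)ᵀ = K⁻¹ := by rw [Matrix.transpose_nonsing_inv, hKT]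
    conv_lhs => rw [← ht]
    rw [Matrix.transpose_apply]
  calc ∑ j, (K i j / sval K j (Kp j)) * wvec K j (Kp j) m
      = ∑ j, K i j * K⁻¹ j m := by
        refine Finset.sum_congr rfl fun j _ => ?_
        rw [w_eq_inv hK j (hKp j) m, hinvsym m j]
        have hs := (sval_pos hK j (hKp j)).ne'
        field_simp
      _ = (K * K⁻¹) i m := (Matrix.mul_apply).symm
      _ = (1 : Matrix (Fin n) (Fin n) ℝ) i m := by rw [Matrix.mul_nonsing_inv _ hdet]
      _ = if m = i then 1 else 0 := by rw [Matrix.one_apply]; simp [eq_comm]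

/-- Multivariate Stein's lemma: for a centered nondegenerate Gaussian `X ∼ N(0, K)` and
`f ∈ L²(X)`,
`E[X_i f(X)] = ∑_j (Cov(X_i,X_j)/Var(X_j|X_{∖j})) E[(X_j − E[X_j|X_{∖j}]) f(X)]`,
where the conditional mean and variance are expressed via the Moore–Penrose pseudoinverse
of the covariance of the remaining coordinates. -/
theorem stein_lemma_multivariate
    {n : ℕ} (K : Matrix (Fin n) (Fin n) ℝ) (hK : K.PosDef)
    (ν : Measure (Fin n → ℝ)) (hν : IsGaussianVec (fun _ => 0) K ν)
    (Kp : ∀ j : Fin n, Matrix {k : Fin n // k ≠ j} {k : Fin n // k ≠ j} ℝ)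
    (hKp : ∀ j, IsMoorePenrose (Matrix.of fun a b : {k : Fin n // k ≠ j} =>
      K (a : Fin n) (b : Fin n)) (Kp j))
    (f : (Fin n → ℝ) → ℝ) (hf : MemLp f 2 ν)
    (i : Fin n) :
    ∫ x, x i * f x ∂ν
      = ∑ j : Fin n,
          (K i j /
            (K j j - ∑ a : {k : Fin n // k ≠ j}, ∑ b : {k : Fin n // k ≠ j},
              K j (a : Fin n) * Kp j a b * K (b : Fin n) j))
          * ∫ x, (x j - ∑ a : {k : Fin n // k ≠ j}, ∑ b : {k : Fin n // k ≠ j},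
              K j (a : Fin n) * Kp j a b * x (b : Fin n)) * f x ∂ν := by
  classical
  have hw_mem : ∀ l : Fin n → ℝ, MemLp (fun x : Fin n → ℝ => ∑ m, l m * x m) 2 ν :=
    memLp_linear_of_gaussian hν
  set g : Fin n → (Fin n → ℝ) → ℝ := fun j x => ∑ m, wvec K j (Kp j) m * x m with hgdef
  have hint : ∀ j, Integrable (fun x => g j x * f x) ν := fun j =>
    integrable_mul_of_memLp_two (hw_mem (wvec K j (Kp j))) hf
  -- rewrite the statement in terms of `sval` and `g`
  have hrw : ∀ j : Fin n,
      (K i j / (K j j - ∑ a : {k : Fin n // k ≠ j}, ∑ b : {k : Fin n // k ≠ j},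
          K j (a : Fin n) * Kp j a b * K (b : Fin n) j))
        * ∫ x, (x j - ∑ a : {k : Fin n // k ≠ j}, ∑ b : {k : Fin n // k ≠ j},
            K j (a : Fin n) * Kp j a b * x (b : Fin n)) * f x ∂ν
      = (K i j / sval K j (Kp j)) * ∫ x, g j x * f x ∂ν := by
    intro j
    congr 1
    refine integral_congr_ae (Filter.Eventually.of_forall fun x => ?_)
    rw [hgdef]
    simp only
    rw [dot_w K j (Kp j) x]
  rw [Finset.sum_congr rfl fun j _ => hrw j]
  have hptwise : ∀ x : Fin n → ℝ,
      ∑ j, (K i j / sval K j (Kp j)) * (g j x * f x) = x i * f x := by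
    intro x
    have h1 : ∑ j, (K i j / sval K j (Kp j)) * g j x = x i := by
      calc ∑ j, (K i j / sval K j (Kp j)) * g j x
          = ∑ j, ∑ m, (K i j / sval K j (Kp j)) * wvec K j (Kp j) m * x m := by
            refine Finset.sum_congr rfl fun j _ => ?_
            rw [hgdef]
            simp only [Finset.mul_sum]
            exact Finset.sum_congr rfl fun m _ => by ring
        _ = ∑ m, (∑ j, (K i j / sval K j (Kp j)) * wvec K j (Kp j) m) * x m := by
            rw [Finset.sum_comm]
            exact Finset.sum_congr rfl fun m _ => (Finset.sum_mul _ _ _).symm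
        _ = ∑ m, (if m = i then (1:ℝ) else 0) * x m := by
            refine Finset.sum_congr rfl fun m _ => ?_
            rw [key_sum hK Kp hKp i m]
        _ = x i := by simp [ite_mul]
    calc ∑ j, (K i j / sval K j (Kp j)) * (g j x * f x)
        = (∑ j, (K i j / sval K j (Kp j)) * g j x) * f x := by
          rw [Finset.sum_mul]
          exact Finset.sum_congr rfl fun j _ => by ring
      _ = x i * f x := by rw [h1]
  symm
  calc ∑ j, (K i j / sval K j (Kp j)) * ∫ x, g j x * f x ∂ν
      = ∑ j, ∫ x, (K i j / sval K j (Kp j)) * (g j x * f x) ∂ν := by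
        exact Finset.sum_congr rfl fun j _ => (integral_const_mul _ _).symm
    _ = ∫ x, ∑ j, (K i j / sval K j (Kp j)) * (g j x * f x) ∂ν := by
        exact (integral_finset_sum Finset.univ fun j _ => (hint j).const_mul _).symm
    _ = ∫ x, x i * f x ∂ν := integral_congr_ae (Filter.Eventually.of_forall hptwise)
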